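/- If Γ is a finite abelian group and S, T are nonempty sets in B(Γ), then the sumset S + T belongs to B(Γ). -/

import Mathlib

open Pointwise

/-- The Boolean algebra of subsets of `Γ` generated by the subgroups of `Γ`. -/
inductive InB (Γ : Type*) [AddGroup Γ] : Set Γ → Prop
  | subgroup (H : AddSubgroup Γ) : InB Γ (H : Set Γ)
  | compl {S : Set Γ} : InB Γ S → InB Γ Sᶜ
  | union {S T : Set Γ} : InB Γ S → InB Γ T → InB Γ (S ∪ T)

/-- `Atom a` is the set of elements generating the same cyclic subgroup as `a`. -/
def Atom {Γ : Type*} [AddGroup Γ] (a : Γ) : Set Γ :=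
  {b | AddSubgroup.zmultiples a = AddSubgroup.zmultiples b}

section Aux

variable {Γ : Type*} [AddCommGroup Γ] [Fintype Γ]

lemma inB_empty : InB Γ (∅ : Set Γ) := by
  have := (InB.subgroup (⊤ : AddSubgroup Γ)).compl
  simpa using this

lemma InB.inter {S T : Set Γ} (hS : InB Γ S) (hT : InB Γ T) : InB Γ (S ∩ T) := by
  have := (hS.compl.union hT.compl).compl
  simpa [Set.compl_union] using this

lemma InB.sUnion {F : Set (Set Γ)} (h : ∀ s ∈ F, InB Γ s) : InB Γ (⋃₀ F) := by
  revert h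
  refine Set.Finite.induction_on F (Set.toFinite F) (fun _ => ?_) (fun {a s} _ _ ih h => ?_)
  · simpa using inB_empty
  · rw [Set.sUnion_insert]
    exact (h _ (Set.mem_insert _ _)).union (ih fun t ht => h t (Set.mem_insert_of_mem _ ht))

lemma atom_subset_of_inB {S : Set Γ} (hS : InB Γ S) : ∀ a ∈ S, Atom a ⊆ S := by
  induction hS with
  | subgroup H =>
    intro a ha b hb
    have : AddSubgroup.zmultiples a ≤ H := AddSubgroup.zmultiples_le_of_mem ha
    exact this (hb ▸ AddSubgroup.mem_zmultiples b)
  | compl _ ih =>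
    intro a ha b hb hbS
    have hba : a ∈ Atom b := Eq.symm hb
    exact ha (ih b hbS hba)
  | union _ _ ih1 ih2 =>
    rintro a (ha | ha) b hb
    · exact Or.inl (ih1 a ha hb)
    · exact Or.inr (ih2 a ha hb)

lemma inB_atom (a : Γ) : InB Γ (Atom a) := by
  have heq : Atom a = (AddSubgroup.zmultiples a : Set Γ) ∩
      (⋃₀ ((fun H : AddSubgroup Γ => (H : Set Γ)) '' {H | H < AddSubgroup.zmultiples a}))ᶜ := by
    ext b
    constructor
    · intro hb
      have hb' : AddSubgroup.zmultiples a = AddSubgroup.zmultiples b := hb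
      constructor
      · exact hb' ▸ AddSubgroup.mem_zmultiples b
      · intro hmem
        obtain ⟨_, ⟨H, hH, rfl⟩, hbH⟩ := hmem
        have hH : H < AddSubgroup.zmultiples a := hH
        exact absurd (AddSubgroup.zmultiples_le_of_mem hbH)
          (not_le_of_gt (lt_of_lt_of_le hH hb'.le))
    · rintro ⟨hba, hnb⟩
      have hle : AddSubgroup.zmultiples b ≤ AddSubgroup.zmultiples a :=
        AddSubgroup.zmultiples_le_of_mem hba
      rcases hle.lt_or_eq with hlt | heq2
      · refine absurd (Set.mem_sUnion.mpr ?_) hnb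
        exact ⟨((AddSubgroup.zmultiples b : AddSubgroup Γ) : Set Γ),
          ⟨AddSubgroup.zmultiples b, hlt, rfl⟩, AddSubgroup.mem_zmultiples b⟩
      · exact heq2.symm
  rw [heq]
  exact (InB.subgroup _).inter (InB.sUnion (by rintro _ ⟨H, _, rfl⟩; exact InB.subgroup H)).compl

lemma inB_of_saturated {S : Set Γ} (h : ∀ a ∈ S, Atom a ⊆ S) : InB Γ S := by
  have hs : S = ⋃₀ (Atom '' S) := by
    apply Set.Subset.antisymm
    · intro a ha
      exact ⟨Atom a, ⟨a, ha, rfl⟩, rfl⟩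
    · rintro b ⟨_, ⟨a, ha, rfl⟩, hb⟩
      exact h a ha hb
  rw [hs]
  exact InB.sUnion (by rintro _ ⟨a, _, rfl⟩; exact inB_atom a)

lemma zmultiples_nsmul_eq (g : Γ) (m : ℕ) (hm : m.Coprime (Fintype.card Γ)) :
    AddSubgroup.zmultiples (m • g) = AddSubgroup.zmultiples g := by
  apply le_antisymm
  · exact AddSubgroup.zmultiples_le_of_mem
      (AddSubgroup.nsmul_mem _ (AddSubgroup.mem_zmultiples g) m)
  · apply AddSubgroup.zmultiples_le_of_mem
    have hcop : m.Coprime (addOrderOf g) := hm.coprime_dvd_right addOrderOf_dvd_card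
    rcases eq_or_lt_of_le (Nat.one_le_iff_ne_zero.mpr (addOrderOf_pos g).ne') with h1 | h1
    · have hg0 : g = 0 := AddMonoid.addOrderOf_eq_one_iff.mp h1.symm
      simp [hg0]
    · obtain ⟨c, -, hc⟩ := Nat.exists_mul_mod_eq_one_of_coprime hcop h1
      have hmod : (m * c) ≡ 1 [MOD addOrderOf g] := by
        unfold Nat.ModEq
        rw [hc, Nat.mod_eq_of_lt h1]
      have h2 : (m * c) • g = 1 • g := nsmul_eq_nsmul_iff_modEq.mpr hmod
      have hg : c • (m • g) = g := by
        rw [smul_smul, mul_comm, h2, one_smul]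
      have hmem := AddSubgroup.nsmul_mem (AddSubgroup.zmultiples (m • g))
        (AddSubgroup.mem_zmultiples (m • g)) c
      rwa [hg] at hmem

lemma exists_coprime_nsmul {x y : Γ}
    (h : AddSubgroup.zmultiples x = AddSubgroup.zmultiples y) :
    ∃ m : ℕ, m.Coprime (Fintype.card Γ) ∧ m • x = y := by
  haveI : NeZero (Fintype.card Γ) := ⟨Fintype.card_ne_zero⟩
  set n := addOrderOf x with hn
  have hnN : n ∣ Fintype.card Γ := addOrderOf_dvd_card
  have hy : y ∈ AddSubgroup.zmultiples x := h ▸ AddSubgroup.mem_zmultiples y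
  obtain ⟨k, hk⟩ := AddSubgroup.mem_zmultiples_iff.mp hy
  have hx : x ∈ AddSubgroup.zmultiples y := h.symm ▸ AddSubgroup.mem_zmultiples x
  obtain ⟨j, hj⟩ := AddSubgroup.mem_zmultiples_iff.mp hx
  have hjk : (j * k) • x = x := by rw [mul_smul, hk, hj]
  have hdvd : (n : ℤ) ∣ (j * k - 1) := by
    rw [hn, addOrderOf_dvd_iff_zsmul_eq_zero, sub_smul, hjk, one_smul, sub_self]
  have h0 : ((j : ZMod n) * (k : ZMod n) - 1) = 0 := by
    have : ((j * k - 1 : ℤ) : ZMod n) = 0 := (ZMod.intCast_zmod_eq_zero_iff_dvd _ _).mpr hdvd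
    push_cast at this
    exact this
  have hk_unit : (k : ZMod n) * (j : ZMod n) = 1 := by
    rw [mul_comm]; linear_combination h0
  set u : (ZMod n)ˣ := ⟨(k : ZMod n), (j : ZMod n), hk_unit, by rw [mul_comm]; exact hk_unit⟩
  obtain ⟨v, hv⟩ := ZMod.unitsMap_surjective hnN u
  set m := (v : ZMod (Fintype.card Γ)).val with hm
  refine ⟨m, ZMod.val_coe_unit_coprime v, ?_⟩
  have hcast : ((m : ℤ) : ZMod n) = (k : ZMod n) := by
    have h1 : ((m : ℕ) : ZMod (Fintype.card Γ)) = (v : ZMod (Fintype.card Γ)) := by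
      rw [hm, ZMod.natCast_val, ZMod.cast_id]
    have h2 : ((m : ℕ) : ZMod n) =
        ZMod.castHom hnN (ZMod n) ((m : ℕ) : ZMod (Fintype.card Γ)) := by
      simp
    have h3 : ZMod.castHom hnN (ZMod n) (v : ZMod (Fintype.card Γ))
        = ((ZMod.unitsMap hnN v : (ZMod n)ˣ) : ZMod n) := by
      rw [ZMod.unitsMap_def]
      rfl
    rw [Int.cast_natCast, h2, h1, h3, hv]
  have hz : ((m : ℤ) - k) • x = 0 := by
    rw [← addOrderOf_dvd_iff_zsmul_eq_zero, ← hn, ← ZMod.intCast_zmod_eq_zero_iff_dvd]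
    push_cast
    rw [sub_eq_zero]
    exact_mod_cast hcast
  rw [sub_smul, sub_eq_zero, hk] at hz
  rw [← natCast_zsmul]
  exact hz

end Aux

theorem sumset_mem_B {Γ : Type*} [AddCommGroup Γ] [Fintype Γ]
    (S T : Set Γ) (hS : InB Γ S) (hT : InB Γ T)
    (hSne : S.Nonempty) (hTne : T.Nonempty) :
    InB Γ (S + T) := by
  apply inB_of_saturated
  intro x hx y hy
  rcases Set.mem_add.mp hx with ⟨s1, hs1, t1, ht1, rfl⟩
  obtain ⟨m, hm, hmy⟩ := exists_coprime_nsmul (hy : _)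
  have h1 : m • s1 ∈ S := atom_subset_of_inB hS s1 hs1
    (show m • s1 ∈ Atom s1 from (zmultiples_nsmul_eq s1 m hm).symm)
  have h2 : m • t1 ∈ T := atom_subset_of_inB hT t1 ht1
    (show m • t1 ∈ Atom t1 from (zmultiples_nsmul_eq t1 m hm).symm)
  exact Set.mem_add.mpr ⟨m • s1, h1, m • t1, h2, by rw [← smul_add, hmy]⟩
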